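/- Fix p ≥ 1 and an increasing sequence a_i → ∞ of positive reals satisfying a_i / a_{i+1}^α → 0 for all α > 0. With u_i, v_i, G^p_n as defined, the set G^p_n is dense in L^p_0 for every n ∈ ℕ. -/

import Mathlib

open MeasureTheory Filter Topology Set ProbabilityTheory
open scoped ENNReal

lemma aux_two_sets {X : Type*} [MeasurableSpace X] [StandardBorelSpace X]
    (μ : Measure X) [IsProbabilityMeasure μ] [NullSingletonClass μ]
    {m : ℝ} (h0 : 0 < m) (hm : m ≤ 1/4) :
    ∃ A B : Set X, MeasurableSet A ∧ MeasurableSet B ∧ Disjoint A B ∧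
      μ A = ENNReal.ofReal m ∧ μ B = ENNReal.ofReal (1/2) := by
  obtain ⟨e, he⟩ := MeasureTheory.exists_measurableEmbedding_real X
  set ν := μ.map e with hν
  have hmap : ∀ s : Set ℝ, MeasurableSet s → ν s = μ (e ⁻¹' s) := fun s hs =>
    Measure.map_apply he.measurable hs
  have : IsProbabilityMeasure ν := Measure.isProbabilityMeasure_map he.measurable.aemeasurable
  have hatom : ∀ y : ℝ, ν {y} = 0 := by
    intro y
    rw [hmap _ (measurableSet_singleton y)]
    exact Set.Subsingleton.measure_zero
      (fun a ha b hb => he.injective (ha.trans hb.symm)) μ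
  have hmono : Monotone (cdf ν) := monotone_cdf ν
  have hleft : ∀ x : ℝ, Function.leftLim (cdf ν) x = cdf ν x := by
    intro x
    have h1 : (cdf ν).measure {x} = 0 := by rw [measure_cdf]; exact hatom x
    rw [StieltjesFunction.measure_singleton] at h1
    have h2 : cdf ν x - Function.leftLim (cdf ν) x ≤ 0 := by
      by_contra h
      exact absurd h1 (by simp [ENNReal.ofReal_eq_zero]; linarith)
    have h3 := hmono.leftLim_le (le_refl x)
    linarith
  have hcont : Continuous (cdf ν) := by
    rw [continuous_iff_continuousAt]
    intro x
    rw [continuousAt_iff_continuous_left_right]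
    constructor
    · have : ContinuousWithinAt (cdf ν) (Iio x) x :=
        hmono.continuousWithinAt_Iio_iff_leftLim_eq.2 (hleft x)
      rw [show Iic x = insert x (Iio x) by ext y; simp [le_iff_lt_or_eq, or_comm]]
      exact this.insert
    · exact (cdf ν).right_continuous x
  have hsurj : ∀ r : ℝ, 0 < r → r < 1 → ∃ t : ℝ, cdf ν t = r := by
    intro r hr0 hr1
    obtain ⟨x₁, hx₁⟩ := ((tendsto_cdf_atBot ν).eventually_lt_const hr0).exists
    obtain ⟨x₂, hx₂⟩ := ((tendsto_cdf_atTop ν).eventually_const_lt hr1).exists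
    have hx12 : x₁ ≤ x₂ := by
      by_contra h
      exact absurd (hmono (le_of_not_ge h)) (by linarith)
    obtain ⟨t, _, ht⟩ := intermediate_value_Icc hx12 hcont.continuousOn
      ⟨hx₁.le, hx₂.le⟩
    exact ⟨t, ht⟩
  obtain ⟨t₁, ht₁⟩ := hsurj m h0 (by linarith)
  obtain ⟨t₂, ht₂⟩ := hsurj (m + 1/2) (by linarith) (by linarith)
  have ht12 : t₁ ≤ t₂ := by
    by_contra h
    have := hmono (le_of_not_ge h)
    rw [ht₁, ht₂] at this; linarith
  have hνt₁ : ν (Iic t₁) = ENNReal.ofReal m := by rw [← ofReal_cdf, ht₁]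
  have hνt₂ : ν (Iic t₂) = ENNReal.ofReal (m + 1/2) := by rw [← ofReal_cdf, ht₂]
  have hIoc : ν (Ioc t₁ t₂) = ENNReal.ofReal (1/2) := by
    have hsplit : ν (Iic t₂) = ν (Iic t₁) + ν (Ioc t₁ t₂) := by
      rw [← measure_union (Set.Iic_disjoint_Ioc le_rfl) measurableSet_Ioc,
        Set.Iic_union_Ioc_eq_Iic ht12]
    rw [hνt₁, hνt₂, ENNReal.ofReal_add h0.le (by norm_num)] at hsplit
    exact (ENNReal.add_right_inj ENNReal.ofReal_ne_top).1 hsplit.symm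
  refine ⟨e ⁻¹' Iic t₁, e ⁻¹' Ioc t₁ t₂, he.measurable measurableSet_Iic,
    he.measurable measurableSet_Ioc,
    (Set.Iic_disjoint_Ioc le_rfl).preimage e, ?_, ?_⟩
  · rw [← hmap _ measurableSet_Iic, hνt₁]
  · rw [← hmap _ measurableSet_Ioc, hIoc]


set_option maxHeartbeats 1000000 in
theorem stmt9 {X : Type*} [MeasurableSpace X] [StandardBorelSpace X]
    (μ : Measure X) [IsProbabilityMeasure μ] [NullSingletonClass μ]
    (p : ℝ) (hp : 1 ≤ p) [Fact (1 ≤ ENNReal.ofReal p)]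
    (a : ℕ → ℝ) (hpos : ∀ i, 0 < a i) (hmono : StrictMono a)
    (htend : Tendsto a atTop atTop)
    (hfast : ∀ α : ℝ, 0 < α → Tendsto (fun i => a i / (a (i + 1)) ^ α) atTop (𝓝 0))
    (n : ℕ) :
    Dense {f : {f : Lp ℝ (ENNReal.ofReal p) μ // ∫ x, f x ∂μ = 0} |
      ∃ i : ℕ, n < i ∧
        ENNReal.ofReal (1 / ((a i) ^ p * (i : ℝ) ^ 2)) < μ {x | a i < f.1 x} ∧
        μ {x | f.1 x < -(a (i - 1))} <
          ENNReal.ofReal (1 / ((a (i + 1)) ^ p * (i : ℝ) ^ 2))} := by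
  classical
  set q := ENNReal.ofReal p with hqdef
  have hp0 : 0 < p := lt_of_lt_of_le one_pos hp
  have hq1 : 1 ≤ q := Fact.out
  have hqt : q ≠ ∞ := ENNReal.ofReal_ne_top
  have hqp : q.toReal = p := ENNReal.toReal_ofReal hp0.le
  rw [Metric.dense_iff]
  intro F ε hε
  set f : Lp ℝ q μ := F.1 with hfdef
  have hf0 : ∫ x, f x ∂μ = 0 := F.2
  set ε' : ℝ := min ε 1 / 16 with hε'def
  have hε'pos : 0 < ε' := by
    have : 0 < min ε 1 := lt_min hε one_pos
    positivity
  have hε'le : ε' ≤ 1/16 := by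
    have : min ε 1 ≤ 1 := min_le_right _ _
    rw [hε'def]; linarith
  -- simple function approximation
  have hfm : MemLp (⇑f) q μ := Lp.memLp f
  obtain ⟨s, hs, hsm⟩ := hfm.exists_simpleFunc_eLpNorm_sub_lt hqt
    (ENNReal.ofReal_pos.mpr hε'pos).ne'
  obtain ⟨M₀, hM₀⟩ := s.exists_forall_norm_le
  set M : ℝ := max M₀ 0 with hMdef
  have hM0 : 0 ≤ M := le_max_right _ _
  have hM : ∀ x, |s x| ≤ M := fun x => (hM₀ x).trans (le_max_left _ _)
  -- integral of s is small
  set c : ℝ := ∫ x, s x ∂μ with hcdef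
  have hfs_int : Integrable (⇑f - ⇑s) μ := (hfm.sub hsm).integrable hq1
  have hs_int : Integrable (⇑s) μ := hsm.integrable hq1
  have hf_int : Integrable (⇑f) μ := hfm.integrable hq1
  have hc : |c| ≤ ε' := by
    have h1 : |c| = |∫ x, (⇑f - ⇑s) x ∂μ| := by
      have : ∫ x, (⇑f - ⇑s) x ∂μ = (∫ x, f x ∂μ) - ∫ x, s x ∂μ :=
        integral_sub hf_int hs_int
      rw [this, hf0, zero_sub, abs_neg]
    have h2 : ‖∫ x, (⇑f - ⇑s) x ∂μ‖ ≤ ∫ x, ‖(⇑f - ⇑s) x‖ ∂μ :=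
      norm_integral_le_integral_norm _
    have h3 : ENNReal.ofReal (∫ x, ‖(⇑f - ⇑s) x‖ ∂μ) = eLpNorm (⇑f - ⇑s) 1 μ := by
      rw [eLpNorm_one_eq_lintegral_enorm,
        ofReal_integral_norm_eq_lintegral_enorm hfs_int]
    have h4 : eLpNorm (⇑f - ⇑s) 1 μ ≤ eLpNorm (⇑f - ⇑s) q μ :=
      eLpNorm_le_eLpNorm_of_exponent_le hq1 (hfm.sub hsm).aestronglyMeasurable
    have h5 : eLpNorm (⇑f - ⇑s) 1 μ < ENNReal.ofReal ε' := lt_of_le_of_lt h4 hs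
    rw [← h3, ENNReal.ofReal_lt_ofReal_iff hε'pos] at h5
    calc |c| = |∫ x, (⇑f - ⇑s) x ∂μ| := h1
      _ = ‖∫ x, (⇑f - ⇑s) x ∂μ‖ := (Real.norm_eq_abs _).symm
      _ ≤ ∫ x, ‖(⇑f - ⇑s) x‖ ∂μ := h2
      _ ≤ ε' := h5.le
  -- choose i
  obtain ⟨N, hN⟩ := eventually_atTop.mp (htend.eventually_ge_atTop (M + 2))
  obtain ⟨N₂, hN₂⟩ := exists_nat_ge (2 * (2 / ε') ^ p)
  set i : ℕ := max (max (N + 1) (n + 1)) (max 1 N₂) with hidef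
  have hiN : N ≤ i - 1 := by
    have h1 : N + 1 ≤ i := le_trans (le_max_left _ _) (le_max_left _ _)
    omega
  have hin : n < i := by
    have : n + 1 ≤ i := le_trans (le_max_right _ _) (le_max_left _ _)
    omega
  have hi1 : 1 ≤ i := le_trans (le_max_left 1 N₂) (le_max_right _ _)
  have hiN₂ : (2 * (2 / ε') ^ p : ℝ) ≤ (i : ℝ) ^ 2 := by
    have h1 : (N₂ : ℝ) ≤ (i : ℝ) := by
      exact_mod_cast le_trans (le_max_right 1 N₂) (le_max_right _ _)
    have h2 : (1 : ℝ) ≤ (i : ℝ) := by exact_mod_cast hi1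
    nlinarith
  have hai2 : M + 2 ≤ a i := hN i (by omega)
  have hai1 : M + 2 ≤ a (i - 1) := hN (i - 1) hiN
  have haipos : 0 < a i := hpos i
  -- the small measure m and constant C
  set C : ℝ := a i + M + 2 with hCdef
  have hC2 : 2 ≤ C := by
    rw [hCdef]; nlinarith
  have hC0 : 0 < C := by linarith
  set m : ℝ := (ε' / C) ^ p with hmdef
  have hecd : 0 < ε' / C := div_pos hε'pos hC0
  have hecd1 : ε' / C ≤ 1 := by
    rw [div_le_one hC0]; linarith
  have hm0 : 0 < m := Real.rpow_pos_of_pos hecd _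
  have hmle : m ≤ ε' / C := by
    calc m = (ε' / C) ^ p := rfl
      _ ≤ (ε' / C) ^ (1 : ℝ) := Real.rpow_le_rpow_of_exponent_ge hecd hecd1 hp
      _ = ε' / C := Real.rpow_one _
  have hmε' : m ≤ ε' := hmle.trans (by
    rw [div_le_iff₀ hC0]; nlinarith)
  have hm14 : m ≤ 1/4 := hmε'.trans (by linarith)
  -- key inequality
  have hkey : 1 / (a i ^ p * (i : ℝ) ^ 2) < m := by
    have hip : (0 : ℝ) < a i ^ p := Real.rpow_pos_of_pos haipos _
    have hi2 : (0 : ℝ) < (i : ℝ) ^ 2 := by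
      have : (1 : ℝ) ≤ (i : ℝ) := by exact_mod_cast hi1
      positivity
    rw [div_lt_iff₀ (by positivity)]
    have hC2a : C ≤ 2 * a i := by rw [hCdef]; linarith
    have h1 : (1 : ℝ) ≤ (2 * a i / C) ^ p := by
      apply Real.one_le_rpow _ hp0.le
      rw [le_div_iff₀ hC0]; linarith
    have h2 : m * (a i ^ p * (2 * (2/ε')^p)) ≤ m * (a i ^ p * (i:ℝ)^2) := by
      apply mul_le_mul_of_nonneg_left _ hm0.le
      exact mul_le_mul_of_nonneg_left hiN₂ hip.le
    have h3 : m * (a i ^ p * (2 * (2/ε')^p)) = 2 * ((2 * a i / C) ^ p) := by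
      have e1 : (2 * a i / C : ℝ) = (ε' / C) * (a i * (2 / ε')) := by
        field_simp
      rw [hmdef, e1, Real.mul_rpow hecd.le (by positivity),
        Real.mul_rpow haipos.le (by positivity)]
      ring
    linarith
  -- pick the sets
  obtain ⟨A, B, hA, hB, hAB, hμA, hμB⟩ := aux_two_sets μ hm0 hm14
  have hμAfin : μ A < ∞ := by
    rw [hμA]; exact ENNReal.ofReal_lt_top
  have hμAtoReal : (μ A).toReal = m := by rw [hμA, ENNReal.toReal_ofReal hm0.le]
  have hμBtoReal : (μ B).toReal = 1/2 := by
    rw [hμB, ENNReal.toReal_ofReal (by norm_num)]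
  -- the correction
  set I : ℝ := ∫ x in A, (a i + 2 - s x) ∂μ with hIdef
  have hI : |I| ≤ ε' := by
    have h1 : ‖I‖ ≤ C * (μ A).toReal := by
      apply norm_setIntegral_le_of_norm_le_const hμAfin
      intro x _
      rw [Real.norm_eq_abs, abs_le]
      have := abs_le.1 (hM x)
      constructor <;> [nlinarith; nlinarith]
    rw [Real.norm_eq_abs, hμAtoReal] at h1
    calc |I| ≤ C * m := h1
      _ ≤ C * (ε' / C) := mul_le_mul_of_nonneg_left hmle hC0.le
      _ = ε' := by field_simp
  set d : ℝ := 2 * (c + I) with hddef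
  have hcI : |c + I| ≤ 2 * ε' := (abs_add_le c I).trans (by linarith)
  have hd : |d| ≤ 4 * ε' := by
    rw [hddef, abs_mul, abs_two]
    linarith
    -- the perturbed function
  set φ : X → ℝ := A.indicator (fun x => a i + 2 - s x) with hφdef
  set ψ : X → ℝ := B.indicator (fun _ => d) with hψdef
  set g : X → ℝ := fun x => s x + φ x - ψ x with hgdef
  have hφm : Measurable φ := (measurable_const.sub s.measurable).indicator hA
  have hψm : Measurable ψ := measurable_const.indicator hB
  have hgm : Measurable g := (s.measurable.add hφm).sub hψm
  have hφle : ∀ x, |φ x| ≤ C := by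
    intro x
    by_cases hx : x ∈ A
    · rw [hφdef, Set.indicator_of_mem hx, abs_le]
      have := abs_le.1 (hM x)
      constructor <;> [nlinarith; nlinarith]
    · rw [hφdef, Set.indicator_of_notMem hx]
      simp [abs_nonneg, hC0.le]
  have hψle : ∀ x, |ψ x| ≤ |d| := by
    intro x
    by_cases hx : x ∈ B
    · rw [hψdef, Set.indicator_of_mem hx]
    · rw [hψdef, Set.indicator_of_notMem hx]
      simp [abs_nonneg]
  have hd1 : |d| ≤ 1 := by linarith
  have hg_mem : MemLp g q μ := by
    apply MemLp.of_bound hgm.aestronglyMeasurable (M + C + 1)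
    apply ae_of_all
    intro x
    rw [Real.norm_eq_abs]
    calc |g x| = |s x + φ x - ψ x| := rfl
      _ ≤ |s x + φ x| + |ψ x| := abs_sub _ _
      _ ≤ (|s x| + |φ x|) + |ψ x| := by linarith [abs_add_le (s x) (φ x)]
      _ ≤ M + C + 1 := by linarith [hM x, hφle x, hψle x, hd1]
  have hφ_int : Integrable φ μ := ((integrable_const (a i + 2)).sub hs_int).indicator hA
  have hψ_int : Integrable ψ μ := (integrable_const d).indicator hB
  have hgint : ∫ x, g x ∂μ = 0 := by
    have h1 : ∫ x, g x ∂μ = (∫ x, (s x + φ x) ∂μ) - ∫ x, ψ x ∂μ :=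
      integral_sub (hs_int.add hφ_int) hψ_int
    have h2 : ∫ x, (s x + φ x) ∂μ = c + ∫ x, φ x ∂μ := integral_add hs_int hφ_int
    have h3 : ∫ x, φ x ∂μ = I := by
      rw [hφdef, integral_indicator hA]
    have h4 : ∫ x, ψ x ∂μ = d * (1/2) := by
      rw [hψdef, integral_indicator hB, setIntegral_const, measureReal_def, hμBtoReal, smul_eq_mul]
      ring
    rw [h1, h2, h3, h4, hddef]
    ring
  set G : Lp ℝ q μ := hg_mem.toLp g with hGdef
  have hGcoe : ⇑G =ᵐ[μ] g := hg_mem.coeFn_toLp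
  have hG0 : ∫ x, G x ∂μ = 0 := by
    rw [integral_congr_ae hGcoe]; exact hgint
  refine ⟨⟨G, hG0⟩, Set.mem_inter ?_ ?_⟩
  · -- in the ball
    rw [Metric.mem_ball, Subtype.dist_eq, Lp.dist_def]
    have hrw : (⇑G - ⇑f : X → ℝ) =ᵐ[μ] (((⇑s - ⇑f) + φ) - ψ) := by
      filter_upwards [hGcoe] with x hx
      simp only [Pi.sub_apply, Pi.add_apply, hx, hgdef]
      ring
    have e1 : eLpNorm (⇑s - ⇑f) q μ ≤ ENNReal.ofReal ε' := by
      rw [eLpNorm_sub_comm]; exact hs.le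
    have e2 : eLpNorm φ q μ ≤ ENNReal.ofReal ε' := by
      have step1 : eLpNorm φ q μ ≤ eLpNorm (A.indicator fun _ => C) q μ := by
        apply eLpNorm_mono
        intro x
        rw [Real.norm_eq_abs, Real.norm_eq_abs]
        by_cases hx : x ∈ A
        · rw [Set.indicator_of_mem hx, abs_of_pos hC0]
          exact hφle x
        · rw [hφdef, Set.indicator_of_notMem hx, Set.indicator_of_notMem hx]
      have step2 : eLpNorm (A.indicator fun _ => C) q μ
          ≤ ‖C‖ₑ * μ A ^ (1 / q.toReal) := eLpNorm_indicator_const_le _ _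
      have step3 : ‖C‖ₑ = ENNReal.ofReal C := Real.enorm_eq_ofReal hC0.le
      have step4 : μ A ^ (1 / q.toReal) = ENNReal.ofReal (ε' / C) := by
        rw [hμA, hqp, ENNReal.ofReal_rpow_of_pos hm0]
        congr 1
        rw [hmdef, ← Real.rpow_mul hecd.le, mul_one_div_cancel hp0.ne',
          Real.rpow_one]
      rw [step3, step4, ← ENNReal.ofReal_mul hC0.le] at step2
      have : C * (ε' / C) = ε' := by field_simp
      rw [this] at step2
      exact step1.trans step2
    have e3 : eLpNorm ψ q μ ≤ ENNReal.ofReal (4 * ε') := by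
      have step2 : eLpNorm ψ q μ ≤ ‖d‖ₑ * μ B ^ (1 / q.toReal) := by
        rw [hψdef]; exact eLpNorm_indicator_const_le _ _
      have step3 : ‖d‖ₑ = ENNReal.ofReal |d| := Real.enorm_eq_ofReal_abs d
      have step4 : μ B ^ (1 / q.toReal) ≤ 1 := by
        apply ENNReal.rpow_le_one
        · rw [hμB]; exact ENNReal.ofReal_le_one.2 (by norm_num)
        · rw [hqp]; positivity
      calc eLpNorm ψ q μ ≤ ‖d‖ₑ * μ B ^ (1 / q.toReal) := step2
        _ ≤ ENNReal.ofReal |d| * 1 := by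
            rw [step3]; exact mul_le_mul_right step4 _
        _ = ENNReal.ofReal |d| := mul_one _
        _ ≤ ENNReal.ofReal (4 * ε') := ENNReal.ofReal_le_ofReal hd
    have hsum : eLpNorm (⇑G - ⇑f) q μ ≤ ENNReal.ofReal (6 * ε') := by
      rw [eLpNorm_congr_ae hrw]
      have hsm1 : AEStronglyMeasurable (⇑s - ⇑f : X → ℝ) μ :=
        (hsm.sub hfm).aestronglyMeasurable
      calc eLpNorm (((⇑s - ⇑f) + φ) - ψ) q μ
          ≤ eLpNorm ((⇑s - ⇑f) + φ) q μ + eLpNorm ψ q μ :=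
            eLpNorm_sub_le (hsm1.add hφm.aestronglyMeasurable)
              hψm.aestronglyMeasurable hq1
        _ ≤ (eLpNorm (⇑s - ⇑f) q μ + eLpNorm φ q μ) + eLpNorm ψ q μ := by
            gcongr
            exact eLpNorm_add_le hsm1 hφm.aestronglyMeasurable hq1
        _ ≤ (ENNReal.ofReal ε' + ENNReal.ofReal ε') + ENNReal.ofReal (4 * ε') := by
            gcongr
        _ = ENNReal.ofReal (6 * ε') := by
            rw [← ENNReal.ofReal_add hε'pos.le hε'pos.le,
              ← ENNReal.ofReal_add (by linarith) (by linarith)]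
            ring_nf
    have h6ε : 6 * ε' < ε := by
      have : min ε 1 ≤ ε := min_le_left _ _
      rw [hε'def]
      linarith
    have htot : eLpNorm (⇑G - ⇑f) q μ < ENNReal.ofReal ε :=
      lt_of_le_of_lt hsum (ENNReal.ofReal_lt_ofReal_iff hε |>.2 h6ε)
    exact (ENNReal.lt_ofReal_iff_toReal_lt (ne_top_of_lt htot)).1 htot
  · -- in the set
    refine ⟨i, hin, ?_, ?_⟩
    · have hae : {x | a i < ⇑G x} =ᵐ[μ] {x | a i < g x} := by
        filter_upwards [hGcoe] with x hx
        exact congrArg (fun y => a i < y) hx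
      have hsub : A ⊆ {x | a i < g x} := by
        intro x hxA
        have hxB : x ∉ B := Set.disjoint_left.1 hAB hxA
        simp only [Set.mem_setOf_eq, hgdef, hφdef, hψdef,
          Set.indicator_of_mem hxA, Set.indicator_of_notMem hxB]
        linarith
      calc ENNReal.ofReal (1 / (a i ^ p * (i:ℝ) ^ 2))
          < ENNReal.ofReal m := (ENNReal.ofReal_lt_ofReal_iff hm0).2 hkey
        _ = μ A := hμA.symm
        _ ≤ μ {x | a i < g x} := measure_mono hsub
        _ = μ {x | a i < ⇑G x} := (measure_congr hae).symm
    · have hae : {x | ⇑G x < -(a (i-1))} =ᵐ[μ] {x | g x < -(a (i-1))} := by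
        filter_upwards [hGcoe] with x hx
        exact congrArg (fun y => y < -(a (i-1))) hx
      have hempty : {x | g x < -(a (i-1))} = ∅ := by
        ext x
        simp only [Set.mem_setOf_eq, Set.mem_empty_iff_false, iff_false, not_lt]
        by_cases hxA : x ∈ A
        · have hxB : x ∉ B := Set.disjoint_left.1 hAB hxA
          simp only [hgdef, hφdef, hψdef, Set.indicator_of_mem hxA,
            Set.indicator_of_notMem hxB]
          linarith
        · by_cases hxB : x ∈ B
          · simp only [hgdef, hφdef, hψdef, Set.indicator_of_notMem hxA,
              Set.indicator_of_mem hxB]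
            have := abs_le.1 (hM x)
            have := abs_le.1 hd1
            linarith
          · simp only [hgdef, hφdef, hψdef, Set.indicator_of_notMem hxA,
              Set.indicator_of_notMem hxB]
            have := abs_le.1 (hM x)
            linarith
      rw [measure_congr hae, hempty, measure_empty]
      apply ENNReal.ofReal_pos.2
      have h1 : (0:ℝ) < a (i+1) ^ p := Real.rpow_pos_of_pos (hpos (i+1)) _
      have h2 : (0:ℝ) < (i:ℝ)^2 := by
        have : (1:ℝ) ≤ (i:ℝ) := by exact_mod_cast hi1
        positivity
      positivity
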